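/- If a ℚ-valued (finite-valued) Boolean weighted relation γ admits the multimorphism ⟨min, min⟩, then γ is antitone (γ(x) ≥ γ(y) whenever x ≥ y coordinatewise) and γ is 1-EDS: for all tuples x, y, γ(x) + γ(y) − 2γ(0^r) ≥ γ(sub(x,y)) − γ(0^r). -/
import Mathlib


/-- The Boolean operation `sub(x,y) = min(x, ¬y)`. -/
def bsub (a b : Bool) : Bool := a && !b

/-- If a finite-valued Boolean weighted relation `γ` admits the multimorphism
`⟨min, min⟩`, then `γ(x) ≥ γ(y)` whenever `x ≥ y` coordinatewise, and `γ` is `1`-EDS: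
`γ(x) + γ(y) − 2γ(0^r) ≥ γ(sub(x,y)) − γ(0^r)` for all `x, y`. -/
theorem stmt15 {r : ℕ} (γ : (Fin r → Bool) → ℚ)
    (hmm : ∀ x y : Fin r → Bool, 2 * γ (fun i => min (x i) (y i)) ≤ γ x + γ y) :
    (∀ x y : Fin r → Bool, (∀ i, y i ≤ x i) → γ y ≤ γ x) ∧
    (∀ x y : Fin r → Bool,
      γ (fun i => bsub (x i) (y i)) - γ (fun _ => false) ≤
        γ x + γ y - 2 * γ (fun _ => false)) := by
  have anti : ∀ x y : Fin r → Bool, (∀ i, y i ≤ x i) → γ y ≤ γ x := by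
    intro x y h
    have := hmm x y
    have hmin : (fun i => min (x i) (y i)) = y := by
      funext i
      exact min_eq_right (h i)
    rw [hmin] at this
    linarith
  refine ⟨anti, fun x y => ?_⟩
  have h1 : γ (fun i => bsub (x i) (y i)) ≤ γ x := by
    apply anti
    intro i
    cases x i <;> cases y i <;> simp [bsub]
  have h2 : γ (fun _ => false) ≤ γ y := by
    apply anti
    intro i
    simp
  linarith
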